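/- Suppose Φ : (0,∞) → ℝ and Ψ : ℝ → ℝ are C¹, strictly convex, with Ψ(0) = 0, and there exist constants ψ > 0 such that for all ρ_i, ρ_n > 0 one has Ψ'(Φ'(ρ_i) − Φ'(ρ_n)) = ψ·(ρ_i − ρ_n)/√(ρ_i ρ_n). Then there exist γ > 0 and φ₀, φ₁ ∈ ℝ such that Φ(c) = γ·(c·log c − c + 1) + φ₀ + φ₁·c and Ψ(ζ) = γ·ψ·(4·cosh(ζ/(2γ)) − 4). -/

import Mathlib

/-- A monotone additive function `ℝ → ℝ` is linear. -/
lemma monotone_additive_linear (G : ℝ → ℝ) (hadd : ∀ s t, G (s + t) = G s + G t)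
    (hmono : Monotone G) : ∀ x, G x = G 1 * x := by
  have hG0 : G 0 = 0 := by
    have := hadd 0 0; simp at this; linarith
  let Gh : ℝ →+ ℝ := AddMonoidHom.mk' G (fun a b => hadd a b)
  have hq : ∀ q : ℚ, G (q : ℝ) = (q : ℝ) * G 1 := by
    intro q
    have := map_ratCast_smul Gh ℝ ℝ q (1 : ℝ)
    simpa [Gh, smul_eq_mul] using this
  intro x
  by_contra hne
  rcases lt_or_gt_of_ne hne with h | h
  · -- G x < G 1 * x
    have hγpos : 0 < G 1 ∨ G 1 ≤ 0 := lt_or_ge 0 (G 1) |>.imp id id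
    rcases hγpos with hγ | hγ
    · obtain ⟨q, hq1, hq2⟩ := exists_rat_btwn (show G x / G 1 < x by
        rw [div_lt_iff₀ hγ]; linarith [mul_comm (G 1) x])
      have h1 : G (q : ℝ) ≤ G x := hmono hq2.le
      rw [hq q] at h1
      have : G x / G 1 * G 1 < (q:ℝ) * G 1 := by
        exact mul_lt_mul_of_pos_right hq1 hγ
      rw [div_mul_cancel₀ _ (ne_of_gt hγ)] at this
      linarith
    ·
      have : G 0 ≤ G 1 := hmono zero_le_one
      rw [hG0] at this
      have hγ0 : G 1 = 0 := le_antisymm hγ this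
      -- then G q = 0 for all rationals, and monotone squeeze gives G x = 0
      have hx0 : G x = 0 := by
        obtain ⟨q, hq1⟩ := exists_rat_gt x
        obtain ⟨p, hp1⟩ := exists_rat_lt x
        have h1 : G (p:ℝ) ≤ G x := hmono hp1.le
        have h2 : G x ≤ G (q:ℝ) := hmono hq1.le
        rw [hq p, hγ0, mul_zero] at h1
        rw [hq q, hγ0, mul_zero] at h2
        linarith
      rw [hx0, hγ0] at h; simp at h
  · -- G 1 * x < G x
    have hγ : 0 < G 1 ∨ G 1 ≤ 0 := lt_or_ge 0 (G 1) |>.imp id id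
    rcases hγ with hγ | hγ
    · obtain ⟨q, hq1, hq2⟩ := exists_rat_btwn (show x < G x / G 1 by
        rw [lt_div_iff₀ hγ]; linarith [mul_comm (G 1) x])
      have h1 : G x ≤ G (q : ℝ) := hmono hq1.le
      rw [hq q] at h1
      have : (q:ℝ) * G 1 < G x / G 1 * G 1 := mul_lt_mul_of_pos_right hq2 hγ
      rw [div_mul_cancel₀ _ (ne_of_gt hγ)] at this
      linarith
    · have : G 0 ≤ G 1 := hmono zero_le_one
      rw [hG0] at this
      have hγ0 : G 1 = 0 := le_antisymm hγ this
      have hx0 : G x = 0 := by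
        obtain ⟨q, hq1⟩ := exists_rat_gt x
        obtain ⟨p, hp1⟩ := exists_rat_lt x
        have h1 : G (p:ℝ) ≤ G x := hmono hp1.le
        have h2 : G x ≤ G (q:ℝ) := hmono hq1.le
        rw [hq p, hγ0, mul_zero] at h1
        rw [hq q, hγ0, mul_zero] at h2
        linarith
      rw [hx0, hγ0] at h; simp at h

theorem tilt_invariant_characterization
    (Φ Ψ : ℝ → ℝ) (ψ : ℝ) (hψ : 0 < ψ)
    (hΦdiff : ∀ c ∈ Set.Ioi (0 : ℝ), DifferentiableAt ℝ Φ c)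
    (hΦconv : StrictConvexOn ℝ (Set.Ioi 0) Φ)
    (hΨdiff : Differentiable ℝ Ψ)
    (hΨconv : StrictConvexOn ℝ Set.univ Ψ)
    (hΨ0 : Ψ 0 = 0)
    (heq : ∀ ρi ρn : ℝ, 0 < ρi → 0 < ρn →
      deriv Ψ (deriv Φ ρi - deriv Φ ρn) = ψ * (ρi - ρn) / Real.sqrt (ρi * ρn)) :
    ∃ γ > (0 : ℝ), ∃ φ0 φ1 : ℝ,
      (∀ c > (0 : ℝ), Φ c = γ * (c * Real.log c - c + 1) + φ0 + φ1 * c) ∧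
      (∀ ζ : ℝ, Ψ ζ = γ * ψ * (4 * Real.cosh (ζ / (2 * γ)) - 4)) := by
  -- derivative of Ψ is strictly monotone, hence injective
  have hΨmono : StrictMono (deriv Ψ) := by
    have := hΨconv.strictMonoOn_deriv (fun x _ => hΨdiff x)
    intro a b hab
    exact this (Set.mem_univ a) (Set.mem_univ b) hab
  have hΨinj : Function.Injective (deriv Ψ) := hΨmono.injective
  -- derivative of Φ is strictly monotone on Ioi 0
  have hΦmono : StrictMonoOn (deriv Φ) (Set.Ioi 0) := hΦconv.strictMonoOn_deriv hΦdiff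
  set F : ℝ → ℝ := fun t => deriv Φ (Real.exp t) with hF
  have hFmono : StrictMono F := fun a b hab =>
    hΦmono (Real.exp_pos a) (Real.exp_pos b) (Real.exp_lt_exp.mpr hab)
  -- key identity
  have key : ∀ s t : ℝ, deriv Ψ (F s - F t) = 2 * ψ * Real.sinh ((s - t) / 2) := by
    intro s t
    have h1 := heq (Real.exp s) (Real.exp t) (Real.exp_pos s) (Real.exp_pos t)
    have hsqrt : Real.sqrt (Real.exp s * Real.exp t) = Real.exp ((s + t) / 2) := by
      have h2 : Real.exp s * Real.exp t = Real.exp ((s+t)/2) * Real.exp ((s+t)/2) := by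
        rw [← Real.exp_add, ← Real.exp_add]; ring_nf
      rw [h2]
      exact Real.sqrt_mul_self (Real.exp_pos _).le
    rw [hsqrt] at h1
    rw [hF]
    rw [h1, Real.sinh_eq]
    rw [div_eq_iff (Real.exp_ne_zero _)]
    rw [show (-((s - t) / 2)) = t / 2 - s / 2 by ring, show (s - t) / 2 = s/2 - t/2 by ring,
      Real.exp_sub, Real.exp_sub]
    have hs2 : Real.exp (s/2) * Real.exp (s/2) = Real.exp s := by
      rw [← Real.exp_add]; ring_nf
    have ht2 : Real.exp (t/2) * Real.exp (t/2) = Real.exp t := by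
      rw [← Real.exp_add]; ring_nf
    have hst : Real.exp ((s+t)/2) = Real.exp (s/2) * Real.exp (t/2) := by
      rw [← Real.exp_add]; ring_nf
    rw [← hs2, ← ht2, hst]
    field_simp
  -- F is additive up to constant
  have hFadd : ∀ s t : ℝ, F s - F t = F (s - t) - F 0 := by
    intro s t
    apply hΨinj
    rw [key s t, key (s - t) 0]
    norm_num
  set G : ℝ → ℝ := fun t => F t - F 0 with hG
  have hGadd : ∀ s t, G (s + t) = G s + G t := by
    intro s t
    have := hFadd (s + t) t
    simp only [hG, add_sub_cancel_right] at this ⊢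
    linarith
  have hGmono : Monotone G := fun a b hab => by
    simp only [hG]; rcases eq_or_lt_of_le hab with h | h
    · rw [h]
    · linarith [hFmono h]
  have hlin := monotone_additive_linear G hGadd hGmono
  set γ : ℝ := G 1 with hγdef
  have hγpos : 0 < γ := by
    have : F 0 < F 1 := hFmono zero_lt_one
    simp only [hγdef, hG]; linarith
  set φ1 : ℝ := F 0 with hφ1
  -- deriv Φ c = γ * log c + φ1 for c > 0
  have hΦ' : ∀ c > (0:ℝ), deriv Φ c = γ * Real.log c + φ1 := by
    intro c hc
    have h1 : F (Real.log c) = deriv Φ c := by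
      simp only [hF, Real.exp_log hc]
    have h2 := hlin (Real.log c)
    simp only [hG] at h2
    rw [← h1]; linarith
  -- deriv Ψ ζ = 2ψ sinh(ζ/(2γ))
  have hΨ' : ∀ ζ : ℝ, deriv Ψ ζ = 2 * ψ * Real.sinh (ζ / (2 * γ)) := by
    intro ζ
    have h1 := key (ζ / γ) 0
    have h2 := hlin (ζ / γ)
    simp only [hG] at h2
    have h3 : F (ζ / γ) - F 0 = ζ := by
      rw [h2]; field_simp
    rw [h3] at h1
    rw [h1, sub_zero, div_div, mul_comm γ 2]
  refine ⟨γ, hγpos, Φ 1 - φ1, φ1, ?_, ?_⟩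
  · -- Φ part
    set f : ℝ → ℝ := fun c => γ * (c * Real.log c - c + 1) + (Φ 1 - φ1) + φ1 * c with hf
    have hfderiv : ∀ c ∈ Set.Ioi (0:ℝ), HasDerivAt f (γ * Real.log c + φ1) c := by
      intro c hc
      have hc0 : c ≠ 0 := ne_of_gt hc
      have h1 : HasDerivAt (fun x : ℝ => x * Real.log x) (Real.log c + 1) c :=
        Real.hasDerivAt_mul_log hc0
      have h2 : HasDerivAt (fun x : ℝ => x * Real.log x - x + 1) (Real.log c + 1 - 1) c :=
        (h1.sub (hasDerivAt_id c)).add_const 1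
      have h3 : HasDerivAt (fun x : ℝ => γ * (x * Real.log x - x + 1))
          (γ * (Real.log c + 1 - 1)) c := h2.const_mul γ
      have h4 : HasDerivAt (fun x : ℝ => γ * (x * Real.log x - x + 1) + (Φ 1 - φ1))
          (γ * (Real.log c + 1 - 1)) c := h3.add_const _
      have h5 : HasDerivAt (fun x : ℝ => φ1 * x) φ1 c := by
        simpa using (hasDerivAt_id c).const_mul φ1
      have := h4.add h5
      exact this.congr_deriv (by ring)
    intro c hc
    have hconv : Convex ℝ (Set.Ioi (0:ℝ)) := convex_Ioi 0
    have hopen : IsOpen (Set.Ioi (0:ℝ)) := isOpen_Ioi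
    have hΦdo : DifferentiableOn ℝ Φ (Set.Ioi 0) :=
      fun x hx => (hΦdiff x hx).differentiableWithinAt
    have hfdo : DifferentiableOn ℝ f (Set.Ioi 0) :=
      fun x hx => (hfderiv x hx).differentiableAt.differentiableWithinAt
    have heqon : Set.EqOn Φ f (Set.Ioi 0) := by
      apply hconv.eqOn_of_fderivWithin_eq hΦdo hfdo hopen.uniqueDiffOn
        (x := 1) ?_ (Set.mem_Ioi.mpr zero_lt_one) ?_
      · intro x hx
        rw [fderivWithin_of_isOpen hopen hx, fderivWithin_of_isOpen hopen hx]
        have hfd : deriv f x = γ * Real.log x + φ1 := (hfderiv x hx).deriv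
        have : deriv Φ x = deriv f x := by rw [hfd, hΦ' x hx]
        rw [← toSpanSingleton_deriv, ← toSpanSingleton_deriv, this]
      · simp only [hf]
        simp [Real.log_one]
    exact heqon (Set.mem_Ioi.mpr hc)
  · -- Ψ part
    set g : ℝ → ℝ := fun ζ => γ * ψ * (4 * Real.cosh (ζ / (2 * γ)) - 4) with hg
    have hgderiv : ∀ ζ : ℝ, HasDerivAt g (2 * ψ * Real.sinh (ζ / (2 * γ))) ζ := by
      intro ζ
      have h1 : HasDerivAt (fun x : ℝ => x / (2 * γ)) (1 / (2 * γ)) ζ := by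
        simpa using (hasDerivAt_id ζ).div_const (2 * γ)
      have h2 : HasDerivAt (fun x : ℝ => Real.cosh (x / (2 * γ)))
          (Real.sinh (ζ / (2 * γ)) * (1 / (2 * γ))) ζ :=
        (Real.hasDerivAt_cosh _).comp ζ h1
      have h3 := ((h2.const_mul (4:ℝ)).sub_const 4).const_mul (γ * ψ)
      exact h3.congr_deriv (by field_simp; ring)
    have hsub : ∀ ζ : ℝ, Ψ ζ - g ζ = Ψ 0 - g 0 := by
      intro ζ
      apply is_const_of_deriv_eq_zero (f := fun x => Ψ x - g x)
      · exact hΨdiff.sub (fun x => (hgderiv x).differentiableAt)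
      · intro x
        rw [deriv_fun_sub (hΨdiff x) (hgderiv x).differentiableAt, (hgderiv x).deriv, hΨ' x]
        ring
    intro ζ
    have h0 : g 0 = 0 := by
      simp only [hg]
      norm_num
    have := hsub ζ
    rw [hΨ0, h0] at this
    have hgζ : g ζ = γ * ψ * (4 * Real.cosh (ζ / (2 * γ)) - 4) := rfl
    linarith
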